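/- (Weights Lemma.) Let s, d₁, …, dₙ ≥ 0 be real numbers and V₁, …, Vₙ vector subspaces of a common finite-dimensional vector space satisfying Σ_{i∈I} d_i + dim(Σ_{i∈I^c} V_i) ≥ s for every subset I ⊆ {1,…,n} (with the conventions Σ_{i∈∅} d_i = 0 and the dimension of the empty sum equal to 0). Fix a generating set {v^i_1, …, v^i_{m_i}} of V_i for each i. Let 𝕁 be the family of tuples J = (J₁, …, Jₙ) with J_i ⊆ {v^i_1, …, v^i_{m_i}} such that J₁ ∪ … ∪ Jₙ is a linearly independent system of cardinality at least s, and let 𝕁̄ = { (J, i) ∈ 𝕁 × {1,…,n} : Ĵ(i) ≥ 0 coordinatewise }, where Ĵ(i) := (#J₁, …, #Jₙ) + (s − (#J₁ + … + #Jₙ)) e_i ∈ ℝⁿ and e₁, …, eₙ is the canonical basis of ℝⁿ. Then there exist nonnegative real numbers (α_{(J,i)})_{(J,i)∈𝕁̄} with Σ_{(J,i)∈𝕁̄} α_{(J,i)} = 1 such that Σ_{(J,i)∈𝕁̄} α_{(J,i)} Ĵ(i) ≤ (d₁, …, dₙ) coordinatewise. -/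

import Mathlib

open Module Set

noncomputable section

variable {W : Type*} [AddCommGroup W] [Module ℝ W]

/-- `Ĵ(i) = (#J₁,…,#Jₙ) + (s − (#J₁+…+#Jₙ)) eᵢ ∈ ℝⁿ`. -/
def hatJ {n : ℕ} {m : Fin n → ℕ} (s : ℝ) (J : (i : Fin n) → Finset (Fin (m i)))
    (i : Fin n) : Fin n → ℝ :=
  fun j => ((J j).card : ℝ) + (if j = i then s - ∑ l, ((J l).card : ℝ) else 0)

/-- Membership in the family `𝕁`: the subfamilies `J i ⊆ {v i 1, …, v i (m i)}` are such
that their union is a linearly independent system of cardinality at least `s`. -/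
def memJfam {n : ℕ} {m : Fin n → ℕ} (s : ℝ) (v : (i : Fin n) → Fin (m i) → W)
    (J : (i : Fin n) → Finset (Fin (m i))) : Prop :=
  LinearIndependent ℝ (fun p : Σ i : Fin n, {j // j ∈ J i} => v p.1 p.2.1) ∧
    s ≤ ∑ i, ((J i).card : ℝ)

/-- Membership in the family `𝕁̄`: `(J, i) ∈ 𝕁` with `Ĵ(i) ≥ 0` coordinatewise. -/
def memJbar {n : ℕ} {m : Fin n → ℕ} (s : ℝ) (v : (i : Fin n) → Fin (m i) → W)
    (p : ((i : Fin n) → Finset (Fin (m i))) × Fin n) : Prop :=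
  memJfam s v p.1 ∧ ∀ j, 0 ≤ hatJ s p.1 p.2 j

end

open Submodule


lemma abel_aux (n : ℕ) (u a e : ℕ → ℝ) (s : ℝ)
    (humono : ∀ j k : ℕ, j ≤ k → k < n → u j ≤ u k) (hu0 : 0 ≤ u 0)
    (ha0 : a 0 = 0)
    (he : ∀ l, l < n → 0 ≤ e l)
    (hse : s ≤ ∑ l ∈ Finset.range n, e l) :
    ∀ N, 1 ≤ N → N ≤ n →
      (∀ k, 1 ≤ k → k < N → s - (∑ l ∈ Finset.Ico k n, e l) ≤ a k) →
      ∑ j ∈ Finset.range N, u j * (a (j+1) - a j) + u (N-1) * (s - a N)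
        ≤ ∑ l ∈ Finset.range n, u (min l (N-1)) * e l := by
  intro N hN
  induction N, hN using Nat.le_induction with
  | base =>
    intro hNn _
    have : ∑ j ∈ Finset.range 1, u j * (a (j+1) - a j) + u 0 * (s - a 1) = u 0 * s := by
      simp [ha0]; ring
    rw [this]
    calc u 0 * s ≤ u 0 * ∑ l ∈ Finset.range n, e l := by
          exact mul_le_mul_of_nonneg_left hse hu0
      _ = ∑ l ∈ Finset.range n, u (min l 0) * e l := by
          rw [Finset.mul_sum]; exact Finset.sum_congr rfl (fun l _ => by simp)
  | succ N hN1 ih =>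
    intro hNn hyp
    have hNn' : N ≤ n := Nat.le_of_succ_le hNn
    have hNltn : N < n := hNn
    have hIH := ih hNn' (fun k hk1 hkN => hyp k hk1 (Nat.lt_succ_of_lt hkN))
    have hstep : ∑ j ∈ Finset.range (N+1), u j * (a (j+1) - a j) + u ((N+1)-1) * (s - a (N+1))
        = (∑ j ∈ Finset.range N, u j * (a (j+1) - a j) + u (N-1) * (s - a N))
          + (u N - u (N-1)) * (s - a N) := by
      rw [Finset.sum_range_succ]
      simp only [Nat.add_sub_cancel]
      ring
    rw [hstep]
    have hbnd : (u N - u (N-1)) * (s - a N) ≤ (u N - u (N-1)) * ∑ l ∈ Finset.Ico N n, e l := by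
      apply mul_le_mul_of_nonneg_left _ (by
        have := humono (N-1) N (Nat.sub_le N 1) hNltn; linarith)
      have := hyp N hN1 (Nat.lt_succ_self N)
      linarith
    have hsplit : ∑ l ∈ Finset.range n, u (min l (N-1)) * e l
          + (u N - u (N-1)) * ∑ l ∈ Finset.Ico N n, e l
        = ∑ l ∈ Finset.range n, u (min l ((N+1)-1)) * e l := by
      simp only [Nat.add_sub_cancel]
      rw [Finset.mul_sum]
      rw [Finset.range_eq_Ico, ← Finset.sum_Ico_consecutive _ (Nat.zero_le N) hNn',
        ← Finset.sum_Ico_consecutive _ (Nat.zero_le N) hNn', add_assoc, ← Finset.sum_add_distrib]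
      congr 1
      · apply Finset.sum_congr rfl
        intro l hl
        have hl' : l < N := (Finset.mem_Ico.1 hl).2
        have h1 : min l (N-1) = l := min_eq_left (by omega)
        have h2 : min l N = l := min_eq_left (by omega)
        rw [h1, h2]
      · apply Finset.sum_congr rfl
        intro l hl
        have hl' : N ≤ l := (Finset.mem_Ico.1 hl).1
        have h1 : min l (N-1) = N-1 := min_eq_right (by omega)
        have h2 : min l N = N := min_eq_right hl'
        rw [h1, h2]; ring
    linarith

lemma abel_bound (n : ℕ) (u a e : ℕ → ℝ) (s : ℝ)
    (humono : ∀ j k : ℕ, j ≤ k → k < n → u j ≤ u k) (hu0 : 0 ≤ u 0)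
    (ha0 : a 0 = 0)
    (he : ∀ l, l < n → 0 ≤ e l)
    (hse : s ≤ ∑ l ∈ Finset.range n, e l)
    (N : ℕ) (hN : 1 ≤ N) (hNn : N ≤ n)
    (hyp : ∀ k, 1 ≤ k → k < N → s - (∑ l ∈ Finset.Ico k n, e l) ≤ a k) :
    ∑ j ∈ Finset.range N, u j * (a (j+1) - a j) + u (N-1) * (s - a N)
      ≤ ∑ l ∈ Finset.range n, u l * e l := by
  refine le_trans (abel_aux n u a e s humono hu0 ha0 he hse N hN hNn hyp) ?_
  apply Finset.sum_le_sum
  intro l hl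
  exact mul_le_mul_of_nonneg_right
    (humono (min l (N-1)) l (min_le_left _ _) (Finset.mem_range.1 hl)) (he l (Finset.mem_range.1 hl))


lemma greedy {W : Type*} [AddCommGroup W] [Module ℝ W] [FiniteDimensional ℝ W]
    {n : ℕ} {m : Fin n → ℕ} (v : (i : Fin n) → Fin (m i) → W)
    (V : Fin n → Submodule ℝ W) (hv : ∀ i, Submodule.span ℝ (Set.range (v i)) = V i)
    (σ : Equiv.Perm (Fin n)) :
    ∀ k : ℕ, k ≤ n →
    ∃ J : (i : Fin n) → Finset (Fin (m i)),
      (∀ i, k ≤ ((σ.symm i : Fin n) : ℕ) → J i = ∅) ∧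
      LinearIndependent ℝ (fun p : Σ i : Fin n, {j // j ∈ J i} => v p.1 p.2.1) ∧
      Submodule.span ℝ (Set.range (fun p : Σ i : Fin n, {j // j ∈ J i} => v p.1 p.2.1))
        = ⨆ i ∈ Finset.univ.filter (fun i => ((σ.symm i : Fin n) : ℕ) < k), V i ∧
      ∀ k' ≤ k, ∑ i ∈ Finset.univ.filter (fun i => ((σ.symm i : Fin n) : ℕ) < k'), (J i).card
        = finrank ℝ (⨆ i ∈ Finset.univ.filter (fun i => ((σ.symm i : Fin n) : ℕ) < k'), V i : Submodule ℝ W) := by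
  classical
  intro k
  induction k with
  | zero =>
    intro _
    refine ⟨fun _ => ∅, fun _ _ => rfl, ?_, ?_, ?_⟩
    · haveI : IsEmpty (Σ i : Fin n, {j // j ∈ (∅ : Finset (Fin (m i)))}) :=
        ⟨fun p => (Finset.notMem_empty _ p.2.2)⟩
      exact linearIndependent_empty_type
    · haveI : IsEmpty (Σ i : Fin n, {j // j ∈ (∅ : Finset (Fin (m i)))}) :=
        ⟨fun p => (Finset.notMem_empty _ p.2.2)⟩
      rw [Set.range_eq_empty, span_empty]
      have : Finset.univ.filter (fun i : Fin n => ((σ.symm i : Fin n) : ℕ) < 0) = ∅ := by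
        apply Finset.filter_false_of_mem; intro i _; omega
      rw [this]; simp
    · intro k' hk'
      interval_cases k'
      have : Finset.univ.filter (fun i : Fin n => ((σ.symm i : Fin n) : ℕ) < 0) = ∅ := by
        apply Finset.filter_false_of_mem; intro i _; omega
      rw [this]
      have h2 : (⨆ i ∈ (∅ : Finset (Fin n)), V i) = (⊥ : Submodule ℝ W) := by simp
      rw [h2]
      simp [finrank_bot]
  | succ k IH =>
    intro hk1
    have hkn : k < n := hk1
    obtain ⟨J, hJ0, hJli, hJsp, hJcard⟩ := IH (Nat.le_of_succ_le hk1)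
    set i₀ : Fin n := σ ⟨k, hkn⟩ with hi₀def
    have hsymmi₀ : σ.symm i₀ = ⟨k, hkn⟩ := Equiv.symm_apply_apply σ _
    have hsv : ((σ.symm i₀ : Fin n) : ℕ) = k := by rw [hsymmi₀]
    have hJi₀ : J i₀ = ∅ := hJ0 i₀ hsv.ge
    set fam : (Σ i : Fin n, {j // j ∈ J i}) → W := fun p => v p.1 p.2.1 with hfamdef
    set B : Set W := Set.range fam with hBdef
    have hBli : LinearIndependent ℝ ((↑) : B → W) := (linearIndepOn_id_range_iff hJli.injective).2 hJli
    obtain ⟨b, hbt, hBb, htb, hbli⟩ :=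
      exists_linearIndepOn_id_extension (s := B) hBli (Set.subset_union_left (t := Set.range (v i₀)))
    set C : Set W := b \ B with hCdef
    have hCr : C ⊆ Set.range (v i₀) := by
      intro x hx
      rcases hbt hx.1 with h | h
      · exact absurd h hx.2
      · exact h
    set newJ : Finset (Fin (m i₀)) :=
      Finset.univ.filter (fun j => v i₀ j ∈ C ∧ ∀ j', v i₀ j' = v i₀ j → j ≤ j') with hnewJdef
    have hnewJmem : ∀ j ∈ newJ, v i₀ j ∈ C ∧ ∀ j', v i₀ j' = v i₀ j → j ≤ j' := by
      intro j hj; exact (Finset.mem_filter.1 hj).2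
    have hinj : ∀ j ∈ newJ, ∀ j' ∈ newJ, v i₀ j = v i₀ j' → j = j' := by
      intro j hj j' hj' hval
      exact le_antisymm ((hnewJmem j hj).2 j' hval.symm) ((hnewJmem j' hj').2 j hval)
    have himage : v i₀ '' ↑newJ = C := by
      apply Set.Subset.antisymm
      · rintro x ⟨j, hj, rfl⟩
        exact (hnewJmem j (by exact_mod_cast hj)).1
      · intro x hx
        obtain ⟨j₁, hj₁⟩ := hCr hx
        have hPne : (Finset.univ.filter (fun j : Fin (m i₀) => v i₀ j = x)).Nonempty :=
          ⟨j₁, Finset.mem_filter.2 ⟨Finset.mem_univ _, hj₁⟩⟩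
        set j0 := (Finset.univ.filter (fun j : Fin (m i₀) => v i₀ j = x)).min' hPne with hjdef
        have hjval : v i₀ j0 = x :=
          (Finset.mem_filter.1
            ((Finset.univ.filter (fun j : Fin (m i₀) => v i₀ j = x)).min'_mem hPne)).2
        refine ⟨j0, ?_, hjval⟩
        have hj0m : j0 ∈ newJ := by
          refine Finset.mem_filter.2 ⟨Finset.mem_univ _, hjval ▸ hx, ?_⟩
          intro j' hj'
          have hj'm : j' ∈ Finset.univ.filter (fun j : Fin (m i₀) => v i₀ j = x) :=
            Finset.mem_filter.2 ⟨Finset.mem_univ _, hj'.trans hjval⟩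
          rw [hjdef]
          exact Finset.min'_le _ _ hj'm
        exact_mod_cast hj0m
    set J' : (i : Fin n) → Finset (Fin (m i)) := Function.update J i₀ newJ with hJ'def
    have hJ'i₀ : J' i₀ = newJ := Function.update_self _ _ _
    have hJ'ne : ∀ i, i ≠ i₀ → J' i = J i := fun i h => Function.update_of_ne h _ _
    set fam' : (Σ i : Fin n, {j // j ∈ J' i}) → W := fun p => v p.1 p.2.1 with hfam'def
    -- range fam' = b
    have hrange : Set.range fam' = b := by
      apply Set.Subset.antisymm
      · rintro x ⟨⟨i, j, hj⟩, rfl⟩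
        by_cases hi : i = i₀
        · subst hi
          have h1 : j ∈ newJ := by rwa [hJ'i₀] at hj
          exact ((hnewJmem j h1).1).1
        · have hjJ : j ∈ J i := by rwa [hJ'ne i hi] at hj
          exact hBb ⟨⟨i, j, hjJ⟩, rfl⟩
      · intro x hx
        by_cases hxB : x ∈ B
        · rcases hxB with ⟨⟨i, j, hj⟩, rfl⟩
          have hi : i ≠ i₀ := by
            intro h; subst h; rw [hJi₀] at hj; exact absurd hj (Finset.notMem_empty _)
          exact ⟨⟨i, j, by rwa [hJ'ne i hi]⟩, rfl⟩
        · have hxC : x ∈ C := ⟨hx, hxB⟩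
          rw [← himage] at hxC
          rcases hxC with ⟨j, hj, rfl⟩
          exact ⟨⟨i₀, j, by rw [hJ'i₀]; exact_mod_cast hj⟩, rfl⟩
    have hfaminj : Function.Injective fam := hJli.injective
    -- injectivity into b
    have hmemb : ∀ p : (Σ i : Fin n, {j // j ∈ J' i}), fam' p ∈ b := by
      intro p; rw [← hrange]; exact ⟨p, rfl⟩
    set e : (Σ i : Fin n, {j // j ∈ J' i}) → b := fun p => ⟨fam' p, hmemb p⟩ with hedef
    have heinj : Function.Injective e := by
      rintro ⟨i, j, hj⟩ ⟨i', j', hj'⟩ hpq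
      have hval : v i j = v i' j' := Subtype.ext_iff.1 hpq
      by_cases hi : i = i₀ <;> by_cases hi' : i' = i₀
      · subst hi; subst hi'
        have hj1 : j ∈ newJ := by rwa [hJ'i₀] at hj
        have hj1' : j' ∈ newJ := by rwa [hJ'i₀] at hj'
        have : j = j' := hinj j hj1 j' hj1' hval
        subst this; rfl
      · exfalso
        have hc : v i j ∈ C := by
          subst hi
          exact (hnewJmem j (by rwa [hJ'i₀] at hj)).1
        have hb : v i' j' ∈ B := ⟨⟨i', j', by rwa [hJ'ne i' hi'] at hj'⟩, rfl⟩
        exact hc.2 (hval ▸ hb)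
      · exfalso
        have hc : v i' j' ∈ C := by
          subst hi'
          exact (hnewJmem j' (by rwa [hJ'i₀] at hj')).1
        have hb : v i j ∈ B := ⟨⟨i, j, by rwa [hJ'ne i hi] at hj⟩, rfl⟩
        exact hc.2 (hval ▸ hb)
      · have hjJ : j ∈ J i := by rwa [hJ'ne i hi] at hj
        have hjJ' : j' ∈ J i' := by rwa [hJ'ne i' hi'] at hj'
        have h2 : (⟨i, j, hjJ⟩ : Σ i : Fin n, {j // j ∈ J i}) = ⟨i', j', hjJ'⟩ := hfaminj hval
        obtain ⟨h3, h4⟩ := Sigma.mk.inj_iff.1 h2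
        subst h3
        have : j = j' := Subtype.ext_iff.1 (eq_of_heq h4)
        subst this; rfl
    have hfam'li : LinearIndependent ℝ fam' := by
      have := LinearIndependent.comp hbli e heinj
      exact this
    -- span
    have hFins : Finset.univ.filter (fun i : Fin n => ((σ.symm i : Fin n) : ℕ) < k+1)
        = insert i₀ (Finset.univ.filter (fun i : Fin n => ((σ.symm i : Fin n) : ℕ) < k)) := by
      ext i
      simp only [Finset.mem_filter, Finset.mem_univ, true_and, Finset.mem_insert]
      constructor
      · intro h
        rcases Nat.lt_succ_iff_lt_or_eq.1 h with h | h
        · exact Or.inr h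
        · left
          have h5 : σ.symm i = σ.symm i₀ := by rw [hsymmi₀]; exact Fin.ext h
          exact σ.symm.injective h5
      · rintro (h | h)
        · rw [h, hsv]; omega
        · omega
    have hspan' : Submodule.span ℝ (Set.range fam')
        = ⨆ i ∈ Finset.univ.filter (fun i : Fin n => ((σ.symm i : Fin n) : ℕ) < k+1), V i := by
      rw [hrange]
      have h1 : span ℝ b = span ℝ (B ∪ Set.range (v i₀)) :=
        le_antisymm (span_mono hbt) (span_le.2 htb)
      rw [h1, span_union, hJsp, hv i₀, hFins, Finset.iSup_insert, sup_comm]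
    refine ⟨J', ?_, hfam'li, hspan', ?_⟩
    · intro i hi
      have hii₀ : i ≠ i₀ := by
        intro h; subst h; omega
      rw [hJ'ne i hii₀]
      exact hJ0 i (by omega)
    · intro k' hk'
      rcases Nat.lt_succ_iff_lt_or_eq.1 (Nat.lt_succ_of_le hk') with hlt | heq
      · -- k' ≤ k
        have hk'k : k' ≤ k := by omega
        rw [← hJcard k' hk'k]
        apply Finset.sum_congr rfl
        intro i hi
        have hii₀ : i ≠ i₀ := by
          intro h; subst h
          have h6 := (Finset.mem_filter.1 hi).2
          omega
        rw [hJ'ne i hii₀]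
      · subst heq
        have hz : ∀ i ∈ (Finset.univ : Finset (Fin n)),
            i ∉ Finset.univ.filter (fun i : Fin n => ((σ.symm i : Fin n) : ℕ) < k+1) →
            (J' i).card = 0 := by
          intro i _ hi
          simp only [Finset.mem_filter, Finset.mem_univ, true_and, not_lt] at hi
          have hii₀ : i ≠ i₀ := by
            intro h; subst h; omega
          rw [hJ'ne i hii₀, hJ0 i (by omega)]; rfl
        rw [Finset.sum_subset (Finset.filter_subset _ _) hz]
        have : ∑ i : Fin n, (J' i).card = Fintype.card (Σ i : Fin n, {j // j ∈ J' i}) := by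
          rw [Fintype.card_sigma]
          exact Finset.sum_congr rfl (fun i _ => (Fintype.card_coe _).symm)
        rw [this, ← finrank_span_eq_card hfam'li, hspan']

set_option maxHeartbeats 1000000 in
lemma core {W : Type*} [AddCommGroup W] [Module ℝ W] [FiniteDimensional ℝ W]
    {n : ℕ} (hn : 0 < n) {m : Fin n → ℕ}
    (s : ℝ) (hs : 0 ≤ s) (d : Fin n → ℝ) (hd : ∀ i, 0 ≤ d i)
    (V : Fin n → Submodule ℝ W)
    (hcond : ∀ I : Finset (Fin n),
      s ≤ ∑ i ∈ I, d i + (finrank ℝ (⨆ i ∈ Iᶜ, V i : Submodule ℝ W) : ℝ))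
    (v : (i : Fin n) → Fin (m i) → W)
    (hv : ∀ i, Submodule.span ℝ (Set.range (v i)) = V i)
    (w : Fin n → ℝ) (hw : ∀ j, 0 ≤ w j) :
    ∃ p : ((i : Fin n) → Finset (Fin (m i))) × Fin n, memJbar s v p ∧
      ∑ j, w j * hatJ s p.1 p.2 j ≤ ∑ j, w j * d j := by
  classical
  set σ : Equiv.Perm (Fin n) := Tuple.sort w with hσdef
  set F : ℕ → Finset (Fin n) :=
    fun k => Finset.univ.filter (fun i => ((σ.symm i : Fin n) : ℕ) < k) with hFdef
  set r : ℕ → ℕ := fun k => finrank ℝ (⨆ i ∈ F k, V i : Submodule ℝ W) with hrdef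
  have hF0 : F 0 = ∅ := by
    simp only [hFdef]
    apply Finset.filter_false_of_mem; intro i _; omega
  have hFn : F n = Finset.univ := by
    simp only [hFdef]
    apply Finset.filter_true_of_mem; intro i _; exact (σ.symm i).isLt
  have hr0 : r 0 = 0 := by
    have h2 : (⨆ i ∈ (∅ : Finset (Fin n)), V i) = (⊥ : Submodule ℝ W) := by simp
    show finrank ℝ (⨆ i ∈ F 0, V i : Submodule ℝ W) = 0
    rw [hF0, h2, finrank_bot]
  have hrk : ∀ k, s ≤ ∑ i ∈ (F k)ᶜ, d i + (r k : ℝ) := by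
    intro k
    have := hcond (F k)ᶜ
    rwa [compl_compl] at this
  have hse0 : s ≤ ∑ i ∈ (F 0)ᶜ, d i := by
    have := hrk 0; rw [hr0] at this; simpa using this
  have hPn : s ≤ ((r n : ℕ) : ℝ) := by
    have := hrk n
    rw [hFn, Finset.compl_univ, Finset.sum_empty, zero_add] at this
    exact this
  have hPex : ∃ k, s ≤ (r k : ℝ) := ⟨n, hPn⟩
  set N : ℕ := Nat.find hPex with hNdef
  have hNs : s ≤ (r N : ℝ) := Nat.find_spec hPex
  have hNn : N ≤ n := Nat.find_le hPn
  have hmin : ∀ k, k < N → (r k : ℝ) < s := by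
    intro k hk
    exact lt_of_not_ge (Nat.find_min hPex hk)
  by_cases hN0 : N = 0
  · -- degenerate case : s = 0
    have hs0 : s = 0 := by
      have := hNs; rw [hN0, hr0] at this
      exact le_antisymm (by exact_mod_cast this) hs
    haveI : IsEmpty (Σ i : Fin n, {j // j ∈ (∅ : Finset (Fin (m i)))}) :=
      ⟨fun p => (Finset.notMem_empty _ p.2.2)⟩
    refine ⟨⟨fun _ => ∅, ⟨0, hn⟩⟩, ⟨⟨linearIndependent_empty_type, by simp [hs0]⟩, ?_⟩, ?_⟩
    · intro j
      simp [hatJ, hs0]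
    · have h1 : ∀ j : Fin n, w j * hatJ (m := m) s (fun _ => ∅) ⟨0, hn⟩ j = 0 := by
        intro j; simp [hatJ, hs0]
      rw [Finset.sum_congr rfl (fun j _ => h1 j)]
      simp only [Finset.sum_const, smul_zero]
      exact Finset.sum_nonneg (fun j _ => mul_nonneg (hw j) (hd j))
  have hN1 : 1 ≤ N := Nat.one_le_iff_ne_zero.2 hN0
  have hN1n : N - 1 < n := by omega
  obtain ⟨J, hJ0, hli, hsp, hcard0⟩ := greedy v V hv σ N hNn
  have hcard : ∀ k' ≤ N, ∑ i ∈ F k', (J i).card = r k' := hcard0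
  set i₀ : Fin n := σ ⟨N - 1, hN1n⟩ with hi₀def
  -- abel data
  set u : ℕ → ℝ := fun k => if h : k < n then w (σ ⟨k, h⟩) else 0 with hudef
  set e : ℕ → ℝ := fun l => if h : l < n then d (σ ⟨l, h⟩) else 0 with hedef
  set a : ℕ → ℝ := fun k => ∑ i ∈ F k, ((J i).card : ℝ) with hadef
  have hu' : ∀ j : Fin n, u (j : ℕ) = w (σ j) := by
    intro j
    simp only [hudef]
    rw [dif_pos j.isLt, Fin.eta]
  have he' : ∀ j : Fin n, e (j : ℕ) = d (σ j) := by
    intro j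
    simp only [hedef]
    rw [dif_pos j.isLt, Fin.eta]
  have haint : ∀ k, a k = ((∑ i ∈ F k, (J i).card : ℕ) : ℝ) := by
    intro k; simp only [hadef]; push_cast; ring
  have har : ∀ k, k ≤ N → a k = (r k : ℝ) := by
    intro k hk
    rw [haint k, hcard k hk]
  have hinsert : ∀ k (hk : k < n), F (k+1) = insert (σ ⟨k, hk⟩) (F k) := by
    intro k hk
    ext i
    simp only [hFdef, Finset.mem_filter, Finset.mem_univ, true_and, Finset.mem_insert]
    constructor
    · intro h
      rcases Nat.lt_succ_iff_lt_or_eq.1 h with h | h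
      · exact Or.inr h
      · left
        have h5 : σ.symm i = σ.symm (σ ⟨k, hk⟩) := by
          rw [Equiv.symm_apply_apply]; exact Fin.ext h
        exact σ.symm.injective h5
    · rintro (h | h)
      · rw [h, Equiv.symm_apply_apply]
        show k < k + 1
        omega
      · omega
  have hnotmem : ∀ k (hk : k < n), σ ⟨k, hk⟩ ∉ F k := by
    intro k hk hmem
    simp only [hFdef, Finset.mem_filter, Finset.mem_univ, true_and] at hmem
    rw [Equiv.symm_apply_apply] at hmem
    exact lt_irrefl k hmem
  have hdiff : ∀ k (hk : k < n), a (k+1) - a k = ((J (σ ⟨k, hk⟩)).card : ℝ) := by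
    intro k hk
    simp only [hadef]
    rw [hinsert k hk, Finset.sum_insert (hnotmem k hk)]
    ring
  have hdiff' : ∀ j : Fin n, a ((j : ℕ)+1) - a (j : ℕ) = ((J (σ j)).card : ℝ) := by
    intro j
    have := hdiff (j : ℕ) j.isLt
    rwa [Fin.eta] at this
  set T : ℝ := ∑ i, ((J i).card : ℝ) with hTdef
  have hTa : T = a N := by
    simp only [hTdef, hadef]
    symm
    apply Finset.sum_subset (Finset.filter_subset _ _)
    intro i _ hi
    simp only [hFdef, Finset.mem_filter, Finset.mem_univ, true_and, not_lt] at hi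
    rw [hJ0 i hi]
    simp
  have hTs : s ≤ T := by rw [hTa, har N le_rfl]; exact hNs
  have hcardi₀ : ((J i₀).card : ℝ) = a N - a (N-1) := by
    have h1 := hdiff (N-1) hN1n
    have h2 : N - 1 + 1 = N := by omega
    rw [h2] at h1
    rw [hi₀def, h1]
  have haN1 : a (N-1) < s := by
    rw [har (N-1) (by omega)]
    exact hmin (N-1) (by omega)
  -- membership in Jbar
  have hmemJ : memJbar s v (⟨J, i₀⟩ : ((i : Fin n) → Finset (Fin (m i))) × Fin n) := by
    refine ⟨⟨hli, hTs⟩, ?_⟩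
    intro j
    simp only [hatJ, ← hTdef]
    by_cases hj : j = i₀
    · rw [if_pos hj, hj, hcardi₀, hTa]
      linarith
    · rw [if_neg hj, add_zero]
      exact Nat.cast_nonneg _
  refine ⟨⟨J, i₀⟩, hmemJ, ?_⟩
  -- now the inequality
  have hsum1 : ∑ j, w j * hatJ s J i₀ j
      = ∑ j, w j * ((J j).card : ℝ) + w i₀ * (s - T) := by
    simp only [hatJ, ← hTdef, mul_add]
    rw [Finset.sum_add_distrib]
    congr 1
    have h1 : ∀ j : Fin n, w j * (if j = i₀ then s - T else 0)
        = (if j = i₀ then w i₀ * (s - T) else 0) := by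
      intro j
      by_cases hj : j = i₀
      · rw [if_pos hj, if_pos hj, hj]
      · rw [if_neg hj, if_neg hj, mul_zero]
    rw [Finset.sum_congr rfl (fun j _ => h1 j), Finset.sum_ite_eq' Finset.univ i₀,
      if_pos (Finset.mem_univ _)]
  have hsum2 : ∑ j, w j * ((J j).card : ℝ)
      = ∑ k ∈ Finset.range N, u k * (a (k+1) - a k) := by
    rw [← Equiv.sum_comp σ (fun j => w j * ((J j).card : ℝ))]
    have h1 : ∀ j : Fin n, w (σ j) * ((J (σ j)).card : ℝ)
        = (fun k : ℕ => u k * (a (k+1) - a k)) (j : ℕ) := by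
      intro j
      show w (σ j) * ((J (σ j)).card : ℝ) = u (j : ℕ) * (a ((j : ℕ)+1) - a (j : ℕ))
      rw [hu' j, hdiff' j]
    rw [Finset.sum_congr rfl (fun j _ => h1 j),
      Fin.sum_univ_eq_sum_range (fun k => u k * (a (k+1) - a k)) n]
    symm
    apply Finset.sum_subset (Finset.range_subset_range.2 hNn)
    intro x hx hnx
    have hxn : x < n := Finset.mem_range.1 hx
    have hxN : N ≤ x := by
      by_contra h
      exact hnx (Finset.mem_range.2 (by omega))
    have hJx : J (σ ⟨x, hxn⟩) = ∅ := by
      apply hJ0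
      rw [Equiv.symm_apply_apply]
      exact hxN
    rw [hdiff x hxn, hJx]
    simp
  have hui₀ : u (N-1) = w i₀ := by
    simp only [hudef]
    rw [dif_pos hN1n]
  -- the complement sums
  have hcompl : ∀ k : ℕ, ∑ i ∈ (F k)ᶜ, d i = ∑ l ∈ Finset.Ico k n, e l := by
    intro k
    have h0 : (F k)ᶜ = Finset.univ.filter (fun i => ¬ ((σ.symm i : Fin n) : ℕ) < k) := by
      simp only [hFdef]
      rw [Finset.compl_filter]
    rw [h0, Finset.sum_filter, ← Equiv.sum_comp σ
      (fun i => if ¬ ((σ.symm i : Fin n) : ℕ) < k then d i else 0)]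
    have h1 : ∀ j : Fin n, (if ¬ ((σ.symm (σ j) : Fin n) : ℕ) < k then d (σ j) else 0)
        = (fun l : ℕ => if k ≤ l then e l else 0) (j : ℕ) := by
      intro j
      show _ = if k ≤ (j : ℕ) then e (j : ℕ) else 0
      rw [Equiv.symm_apply_apply]
      by_cases h : k ≤ (j : ℕ)
      · rw [if_pos (show ¬ ((⟨(j : ℕ), j.isLt⟩ : Fin n) : ℕ) < k by simp; omega), if_pos h, he' j]
      · rw [if_neg (show ¬¬ ((⟨(j : ℕ), j.isLt⟩ : Fin n) : ℕ) < k by simp; omega), if_neg h]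
    rw [Finset.sum_congr rfl (fun j _ => h1 j),
      Fin.sum_univ_eq_sum_range (fun l => if k ≤ l then e l else 0) n,
      ← Finset.sum_filter]
    congr 1
    ext l
    simp only [Finset.mem_filter, Finset.mem_range, Finset.mem_Ico]
    omega
  have habel := abel_bound n u a e s
    (by
      intro j k hjk hkn
      simp only [hudef]
      rw [dif_pos (lt_of_le_of_lt hjk hkn), dif_pos hkn]
      exact Tuple.monotone_sort w (Fin.mk_le_mk.2 hjk))
    (by
      simp only [hudef]
      rw [dif_pos hn]
      exact hw _)
    (by simp only [hadef]; rw [hF0]; simp)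
    (by
      intro l hl
      simp only [hedef]
      rw [dif_pos hl]
      exact hd _)
    (by
      have h3 := hcompl 0
      rw [← Finset.range_eq_Ico] at h3
      rw [← h3]
      exact hse0)
    N hN1 hNn
    (by
      intro k hk1 hkN
      rw [← hcompl k, har k (le_of_lt hkN)]
      have h4 := hrk k
      linarith)
  have hrhs : ∑ l ∈ Finset.range n, u l * e l = ∑ j, w j * d j := by
    rw [← Fin.sum_univ_eq_sum_range (fun l => u l * e l) n,
      ← Equiv.sum_comp σ (fun j => w j * d j)]
    apply Finset.sum_congr rfl
    intro j _
    show u (j : ℕ) * e (j : ℕ) = _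
    rw [hu' j, he' j]
  rw [hsum1, hsum2]
  have hfin : w i₀ * (s - T) = u (N-1) * (s - a N) := by rw [hui₀, hTa]
  rw [hfin, ← hrhs]
  exact habel

set_option maxHeartbeats 1000000 in
theorem weights_lemma
    {W : Type*} [AddCommGroup W] [Module ℝ W] [FiniteDimensional ℝ W]
    {n : ℕ} (hn : 0 < n) (m : Fin n → ℕ)
    (s : ℝ) (hs : 0 ≤ s) (d : Fin n → ℝ) (hd : ∀ i, 0 ≤ d i)
    (V : Fin n → Submodule ℝ W)
    (hcond : ∀ I : Finset (Fin n),
      s ≤ ∑ i ∈ I, d i + (finrank ℝ (⨆ i ∈ Iᶜ, V i : Submodule ℝ W) : ℝ))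
    (v : (i : Fin n) → Fin (m i) → W)
    (hv : ∀ i, Submodule.span ℝ (Set.range (v i)) = V i) :
    ∃ α : ((i : Fin n) → Finset (Fin (m i))) × Fin n → ℝ,
      (∀ p, 0 ≤ α p) ∧
      (∀ p, ¬ memJbar s v p → α p = 0) ∧
      (∑ p, α p) = 1 ∧
      ∀ j, ∑ p, α p * hatJ s p.1 p.2 j ≤ d j := by
  classical
  set T : Finset (((i : Fin n) → Finset (Fin (m i))) × Fin n) :=
    Finset.univ.filter (fun p => memJbar s v p) with hTdef
  set f : (((i : Fin n) → Finset (Fin (m i))) × Fin n) → (Fin n → ℝ) :=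
    fun p => hatJ s p.1 p.2 with hfdef
  set X : Finset (Fin n → ℝ) := T.image f with hXdef
  have hmemT : ∀ p, memJbar s v p → p ∈ T := by
    intro p hp
    simp only [hTdef, Finset.mem_filter]
    exact ⟨Finset.mem_univ _, hp⟩
  have hmemT' : ∀ p ∈ T, memJbar s v p := by
    intro p hp
    simp only [hTdef, Finset.mem_filter] at hp
    exact hp.2
  -- step 1 : some convex combination is ≤ d
  have hKx : ∃ x ∈ convexHull ℝ (X : Set (Fin n → ℝ)), ∀ j, x j ≤ d j := by
    by_contra hno
    push_neg at hno
    set K : Set (Fin n → ℝ) := convexHull ℝ (X : Set (Fin n → ℝ)) with hKdef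
    set D : Set (Fin n → ℝ) := {y | ∀ j, y j ≤ d j} with hDdef
    have hdD : d ∈ D := fun j => le_rfl
    have hdisj : Disjoint K D := by
      rw [Set.disjoint_left]
      intro x hx hxD
      obtain ⟨j, hj⟩ := hno x hx
      exact absurd (hxD j) (not_le.2 hj)
    have hKcomp : IsCompact K := X.finite_toSet.isCompact_convexHull ℝ
    have hKconv : Convex ℝ K := convex_convexHull ℝ _
    have hDconv : Convex ℝ D := by
      intro y hy z hz aa bb ha hb hab
      intro j
      simp only [Pi.add_apply, Pi.smul_apply, smul_eq_mul]
      calc aa * y j + bb * z j ≤ aa * d j + bb * d j :=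
            add_le_add (mul_le_mul_of_nonneg_left (hy j) ha)
              (mul_le_mul_of_nonneg_left (hz j) hb)
        _ = d j := by rw [← add_mul, hab, one_mul]
    have hDclosed : IsClosed D := by
      have hD2 : D = ⋂ j, {y : Fin n → ℝ | y j ≤ d j} := by
        ext y; simp only [hDdef, Set.mem_setOf_eq, Set.mem_iInter]
      rw [hD2]
      exact isClosed_iInter (fun j => isClosed_le (continuous_apply j) continuous_const)
    obtain ⟨g, uu, vv, hKlt, huv, hDgt⟩ :=
      geometric_hahn_banach_compact_closed hKconv hKcomp hDconv hDclosed hdisj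
    set wv : Fin n → ℝ := fun j => - g (fun j' => if j = j' then 1 else 0) with hwvdef
    have hg : ∀ y : Fin n → ℝ, g y = - ∑ j, y j * wv j := by
      intro y
      conv_lhs => rw [pi_eq_sum_univ y]
      rw [map_sum, ← Finset.sum_neg_distrib]
      apply Finset.sum_congr rfl
      intro j _
      rw [map_smul]
      simp only [hwvdef, smul_eq_mul]
      ring
    have hwv : ∀ j, 0 ≤ wv j := by
      intro j
      by_contra hneg
      push_neg at hneg
      set t : ℝ := (- vv - ∑ j', d j' * wv j') / (- wv j) with htdef
      have hwne : wv j ≠ 0 := ne_of_lt hneg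
      have ht0 : 0 ≤ t := by
        apply div_nonneg _ (by linarith)
        have hdd := hDgt d hdD
        rw [hg d] at hdd
        linarith
      set y : Fin n → ℝ := fun j' => d j' - (if j = j' then t else 0) with hydef
      have hyD : y ∈ D := by
        intro j'
        simp only [hydef]
        by_cases h : j = j'
        · rw [if_pos h]; linarith
        · rw [if_neg h]; linarith
      have hyval : ∑ j', y j' * wv j' = ∑ j', d j' * wv j' - t * wv j := by
        simp only [hydef, sub_mul]
        rw [Finset.sum_sub_distrib]
        congr 1
        have h1 : ∀ j' : Fin n, (if j = j' then t else 0) * wv j'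
            = (if j' = j then t * wv j' else 0) := by
          intro j'
          by_cases h : j = j'
          · rw [if_pos h, if_pos h.symm]
          · rw [if_neg h, if_neg (Ne.symm h), zero_mul]
        rw [Finset.sum_congr rfl (fun j' _ => h1 j'), Finset.sum_ite_eq' Finset.univ j,
          if_pos (Finset.mem_univ _)]
      have hcontr := hDgt y hyD
      rw [hg y, hyval] at hcontr
      have h9 : -wv j ≠ 0 := neg_ne_zero.2 hwne
      have htw : t * wv j = vv + ∑ j', d j' * wv j' := by
        have h10 : (-vv - ∑ j', d j' * wv j') / (-wv j) * (-wv j)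
            = (-vv - ∑ j', d j' * wv j') := div_mul_cancel₀ _ h9
        rw [mul_neg] at h10
        rw [htdef]
        linarith
      rw [htw] at hcontr
      linarith
    -- now apply core with weight wv
    obtain ⟨p, hp, hple⟩ := core hn s hs d hd V hcond v hv wv hwv
    have hfpX : f p ∈ X := Finset.mem_image_of_mem f (hmemT p hp)
    have hfpK : f p ∈ K := subset_convexHull ℝ (X : Set (Fin n → ℝ)) hfpX
    have h1 := hKlt (f p) hfpK
    have h2 := hDgt d hdD
    rw [hg d] at h2
    rw [hg (f p)] at h1
    have h3 : ∑ j, (f p) j * wv j = ∑ j, wv j * hatJ s p.1 p.2 j := by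
      apply Finset.sum_congr rfl
      intro j _
      rw [mul_comm]
    have h4 : ∑ j, d j * wv j = ∑ j, wv j * d j := by
      apply Finset.sum_congr rfl
      intro j _
      rw [mul_comm]
    rw [h3] at h1
    rw [h4] at h2
    linarith
  -- step 2 : pull back the convex combination
  obtain ⟨x, hxK, hxle⟩ := hKx
  rw [Finset.convexHull_eq] at hxK
  obtain ⟨wgt, hwgt0, hwgt1, hwc⟩ := hxK
  rw [Finset.centerMass_eq_of_sum_1 _ id hwgt1] at hwc
  set rep : (Fin n → ℝ) → (((i : Fin n) → Finset (Fin (m i))) × Fin n) :=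
    fun y => if hy : ∃ p ∈ T, f p = y then hy.choose else (fun _ => ∅, ⟨0, hn⟩) with hrepdef
  have hrep : ∀ y ∈ X, rep y ∈ T ∧ f (rep y) = y := by
    intro y hy
    rcases Finset.mem_image.1 hy with ⟨p, hp, hpy⟩
    have hex : ∃ p ∈ T, f p = y := ⟨p, hp, hpy⟩
    simp only [hrepdef, dif_pos hex]
    exact ⟨hex.choose_spec.1, hex.choose_spec.2⟩
  set α : (((i : Fin n) → Finset (Fin (m i))) × Fin n) → ℝ :=
    fun p => ∑ y ∈ X.filter (fun y => rep y = p), wgt y with hαdef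
  refine ⟨α, ?_, ?_, ?_, ?_⟩
  · intro p
    apply Finset.sum_nonneg
    intro y hy
    exact hwgt0 y (Finset.mem_filter.1 hy).1
  · intro p hp
    have hpT : p ∉ T := fun h => hp (hmemT' p h)
    have hempty : X.filter (fun y => rep y = p) = ∅ := by
      rw [Finset.filter_eq_empty_iff]
      intro y hy hrp
      exact hpT (hrp ▸ (hrep y hy).1)
    simp only [hαdef, hempty, Finset.sum_empty]
  · have hfiber1 : ∑ p ∈ Finset.univ, ∑ y ∈ X.filter (fun y => rep y = p), wgt y
        = ∑ y ∈ X, wgt y :=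
      Finset.sum_fiberwise_of_maps_to (fun y _ => Finset.mem_univ (rep y)) wgt
    rw [show (∑ p, α p) = ∑ p ∈ Finset.univ,
      ∑ y ∈ X.filter (fun y => rep y = p), wgt y from rfl]
    rw [hfiber1]
    exact hwgt1
  · intro j
    have hfiber2 : ∑ p ∈ Finset.univ, ∑ y ∈ X.filter (fun y => rep y = p), (wgt y * y j)
        = ∑ y ∈ X, wgt y * y j :=
      Finset.sum_fiberwise_of_maps_to (fun y _ => Finset.mem_univ (rep y)) _
    have hsum : ∑ p, α p * hatJ s p.1 p.2 j = ∑ y ∈ X, wgt y * y j := by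
      rw [← hfiber2]
      apply Finset.sum_congr rfl
      intro p _
      simp only [hαdef]
      rw [Finset.sum_mul]
      apply Finset.sum_congr rfl
      intro y hy
      rcases Finset.mem_filter.1 hy with ⟨hyX, hyp⟩
      have hfy : hatJ s p.1 p.2 = y := by
        rw [← hyp]
        exact (hrep y hyX).2
      rw [hfy]
    have hxj : ∑ y ∈ X, wgt y * y j = x j := by
      have h5 := congrFun hwc j
      rw [Finset.sum_apply] at h5
      rw [← h5]
      apply Finset.sum_congr rfl
      intro y _
      simp [smul_eq_mul]
    rw [hsum, hxj]
    exact hxle j
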